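/- Let s ∈ ℝ and 0 < β ≤ 1, and set P_β(μ) = μ³ - βμ. There exists a constant C₁ = C₁(s), independent of β, with the following property: if M : ℝ → ℂ is measurable and satisfies |M(μ)| ≤ C |3μ² - β|^{1/2} ⟨μ⟩^{s+1} for all μ ∈ ℝ and some constant C > 0, then for every measurable g : ℝ → ℂ, (∫_ℝ |M(μ)|² |g(P_β(μ))|² dμ)^{1/2} ≤ C · C₁ · (∫_ℝ ⟨ξ⟩^{2(s+1)/3} |g(ξ)|² dξ)^{1/2}. -/

import Mathlib

open MeasureTheory

noncomputable def jb (x : ℝ) : ℝ := Real.sqrt (1 + x ^ 2)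

lemma jb_pos (x : ℝ) : 0 < jb x := Real.sqrt_pos.2 (by positivity)

lemma jb_sq (x : ℝ) : jb x ^ 2 = 1 + x ^ 2 := Real.sq_sqrt (by positivity)

lemma jb_cube_le (x β : ℝ) (hb : 0 < β) (hb1 : β ≤ 1) :
    jb x ^ 3 ≤ 13 * jb (x ^ 3 - β * x) := by
  have h1 : (jb x ^ 3) ^ 2 ≤ (13 * jb (x ^ 3 - β * x)) ^ 2 := by
    have e1 : (jb x ^ 3) ^ 2 = (1 + x ^ 2) ^ 3 := by
      rw [← pow_mul, show 3 * 2 = 2 * 3 by ring, pow_mul, jb_sq]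
    have e2 : (13 * jb (x ^ 3 - β * x)) ^ 2 = 169 * (1 + (x ^ 3 - β * x) ^ 2) := by
      rw [mul_pow, jb_sq]; ring
    rw [e1, e2]
    have hx : (x ^ 3 - β * x) ^ 2 = x ^ 2 * (x ^ 2 - β) ^ 2 := by ring
    rw [hx]
    nlinarith [sq_nonneg x, mul_nonneg (sq_nonneg x) (sq_nonneg (x^2 - 341/336)),
      mul_nonneg (sq_nonneg x) (sq_nonneg (x^2-β)),
      mul_nonneg (mul_nonneg (sq_nonneg x) (sq_nonneg x)) (sub_nonneg.2 hb1),
      mul_nonneg (sq_nonneg x) (sub_nonneg.2 hb1)]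
  exact (pow_le_pow_iff_left₀ (by have := jb_pos x; have := jb_pos (x ^ 3 - β * x); positivity) (by have := jb_pos x; have := jb_pos (x ^ 3 - β * x); positivity) two_ne_zero).1 h1

lemma le_jb_cube (x β : ℝ) (hb : 0 < β) (hb1 : β ≤ 1) :
    jb (x ^ 3 - β * x) ≤ 13 * jb x ^ 3 := by
  have h1 : jb (x ^ 3 - β * x) ^ 2 ≤ (13 * jb x ^ 3) ^ 2 := by
    have e1 : (13 * jb x ^ 3) ^ 2 = 169 * (1 + x ^ 2) ^ 3 := by
      rw [mul_pow, ← pow_mul, show 3 * 2 = 2 * 3 by ring, pow_mul, jb_sq]; ring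
    rw [jb_sq, e1]
    have hx : (x ^ 3 - β * x) ^ 2 = x ^ 2 * (x ^ 2 - β) ^ 2 := by ring
    rw [hx]
    nlinarith [mul_nonneg (sq_nonneg x) (sq_nonneg (x^2-β)),
      mul_nonneg (mul_nonneg (sq_nonneg x) (sq_nonneg x)) hb.le,
      mul_nonneg (sq_nonneg x) hb.le, sq_nonneg x,
      mul_nonneg (mul_nonneg (sq_nonneg x) (sq_nonneg x)) (sq_nonneg x),
      mul_nonneg (mul_nonneg (sq_nonneg x) (sq_nonneg x)) (sub_nonneg.2 hb1),
      mul_nonneg (sq_nonneg x) (sub_nonneg.2 hb1)]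
  exact (pow_le_pow_iff_left₀ (by have := jb_pos (x ^ 3 - β * x); positivity) (by have := jb_pos x; have := jb_pos (x ^ 3 - β * x); positivity) two_ne_zero).1 h1

lemma jb_rpow_le (s x β : ℝ) (hb : 0 < β) (hb1 : β ≤ 1) :
    jb x ^ (2 * (s + 1)) ≤ 13 ^ |2 * (s + 1) / 3| * jb (x ^ 3 - β * x) ^ (2 * (s + 1) / 3) := by
  set t : ℝ := 2 * (s + 1) / 3 with ht
  have hA := jb_pos x
  have hB := jb_pos (x ^ 3 - β * x)
  have key : jb x ^ (2 * (s + 1)) = ((jb x ^ 3 : ℝ)) ^ t := by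
    have : (2 : ℝ) * (s + 1) = 3 * t := by rw [ht]; ring
    rw [this, ← Real.rpow_natCast (jb x) 3, ← Real.rpow_mul hA.le]
    norm_num
  rw [key]
  rcases le_or_gt 0 t with h | h
  · have h1 : (jb x ^ 3 : ℝ) ^ t ≤ (13 * jb (x ^ 3 - β * x)) ^ t :=
      Real.rpow_le_rpow (by positivity) (jb_cube_le x β hb hb1) h
    rw [Real.mul_rpow (by norm_num) hB.le] at h1
    rwa [abs_of_nonneg h]
  · have h1 : (13 * jb x ^ 3 : ℝ) ^ t ≤ jb (x ^ 3 - β * x) ^ t :=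
      Real.rpow_le_rpow_of_nonpos hB (le_jb_cube x β hb hb1) h.le
    rw [Real.mul_rpow (by norm_num) (by positivity)] at h1
    rw [abs_of_neg h]
    calc (jb x ^ 3 : ℝ) ^ t = (13:ℝ) ^ (-t) * ((13:ℝ) ^ t * (jb x ^ 3) ^ t) := by
          rw [← mul_assoc, ← Real.rpow_add (by norm_num)]; simp
      _ ≤ (13:ℝ) ^ (-t) * jb (x ^ 3 - β * x) ^ t :=
          mul_le_mul_of_nonneg_left h1 (Real.rpow_nonneg (by norm_num) _)

lemma my1d {s : Set ℝ} {f f' : ℝ → ℝ} (hs : MeasurableSet s)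
    (hf' : ∀ x ∈ s, HasDerivWithinAt f (f' x) s x) (hf : Set.InjOn f s) (g : ℝ → ENNReal) :
    ∫⁻ x in f '' s, g x = ∫⁻ x in s, ENNReal.ofReal |f' x| * g (f x) := by
  simpa only [ContinuousLinearMap.det_toSpanSingleton] using
    lintegral_image_eq_lintegral_abs_det_fderiv_mul volume hs
      (fun x hx => (hf' x hx).hasFDerivWithinAt) hf g

open Set in
lemma cov (β : ℝ) (hb : 0 < β) (H : ℝ → ENNReal) :
    ∫⁻ x : ℝ, ENNReal.ofReal |3 * x ^ 2 - β| * H (x ^ 3 - β * x) ≤ 3 * ∫⁻ ξ : ℝ, H ξ := by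
  set r : ℝ := Real.sqrt (β / 3) with hrdef
  have hr : 0 ≤ r := Real.sqrt_nonneg _
  have hr2 : r ^ 2 = β / 3 := Real.sq_sqrt (by linarith)
  set P : ℝ → ℝ := fun y => y ^ 3 - β * y with hP
  have hder : ∀ x : ℝ, HasDerivAt P (3 * x ^ 2 - β) x := by
    intro x
    have h1 : HasDerivAt (fun y : ℝ => y ^ 3) (3 * x ^ 2) x := by
      simpa using hasDerivAt_pow 3 x
    have h2 : HasDerivAt (fun y : ℝ => β * y) β x := by
      simpa using (hasDerivAt_id x).const_mul β
    exact h1.sub h2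
  have hcont : Continuous P := by fun_prop
  have hderiv : ∀ x : ℝ, deriv P x = 3 * x ^ 2 - β := fun x => (hder x).deriv
  have hm1 : StrictMonoOn P (Iic (-r)) := by
    apply strictMonoOn_of_deriv_pos (convex_Iic _) hcont.continuousOn
    intro x hx
    rw [interior_Iic, mem_Iio] at hx
    rw [hderiv]
    nlinarith [mul_pos (show (0:ℝ) < r - x by linarith) (show (0:ℝ) < -r - x by linarith)]
  have hm2 : StrictAntiOn P (Icc (-r) r) := by
    apply strictAntiOn_of_deriv_neg (convex_Icc _ _) hcont.continuousOn
    intro x hx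
    rw [interior_Icc, mem_Ioo] at hx
    rw [hderiv]
    nlinarith [mul_pos (show (0:ℝ) < r - x by linarith [hx.2]) (show (0:ℝ) < r + x by linarith [hx.1])]
  have hm3 : StrictMonoOn P (Ici r) := by
    apply strictMonoOn_of_deriv_pos (convex_Ici _) hcont.continuousOn
    intro x hx
    rw [interior_Ici, mem_Ioi] at hx
    rw [hderiv]
    nlinarith [mul_pos (show (0:ℝ) < x - r by linarith) (show (0:ℝ) < x + r by linarith)]
  have piece : ∀ u : Set ℝ, MeasurableSet u → Set.InjOn P u →
      ∫⁻ x in u, ENNReal.ofReal |3 * x ^ 2 - β| * H (P x) ≤ ∫⁻ ξ : ℝ, H ξ := by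
    intro u hu hinj
    rw [← my1d hu (fun x _ => (hder x).hasDerivWithinAt) hinj H]
    exact setLIntegral_le_lintegral _ _
  have huniv : (Iic (-r) ∪ (Icc (-r) r ∪ Ici r) : Set ℝ) = univ := by
    ext x
    simp only [mem_union, mem_Iic, mem_Icc, mem_Ici, mem_univ, iff_true]
    rcases le_total x (-r) with h | h
    · exact Or.inl h
    · rcases le_total x r with h' | h'
      · exact Or.inr (Or.inl ⟨h, h'⟩)
      · exact Or.inr (Or.inr h')
  calc ∫⁻ x : ℝ, ENNReal.ofReal |3 * x ^ 2 - β| * H (x ^ 3 - β * x)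
      = ∫⁻ x in (Iic (-r) ∪ (Icc (-r) r ∪ Ici r)),
          ENNReal.ofReal |3 * x ^ 2 - β| * H (P x) := by
        rw [huniv, setLIntegral_univ]
    _ ≤ (∫⁻ x in Iic (-r), ENNReal.ofReal |3 * x ^ 2 - β| * H (P x)) +
        ((∫⁻ x in Icc (-r) r, ENNReal.ofReal |3 * x ^ 2 - β| * H (P x)) +
         (∫⁻ x in Ici r, ENNReal.ofReal |3 * x ^ 2 - β| * H (P x))) :=
        le_trans (lintegral_union_le _ _ _)
          (add_le_add_right (lintegral_union_le _ _ _) _)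
    _ ≤ (∫⁻ ξ : ℝ, H ξ) + ((∫⁻ ξ : ℝ, H ξ) + (∫⁻ ξ : ℝ, H ξ)) :=
        add_le_add (piece _ measurableSet_Iic hm1.injOn)
          (add_le_add (piece _ measurableSet_Icc hm2.injOn)
            (piece _ measurableSet_Ici hm3.injOn))
    _ = 3 * ∫⁻ ξ : ℝ, H ξ := by ring_nf

theorem stmt12 (s : ℝ) :
    ∃ C₁ : ℝ, 0 < C₁ ∧
      ∀ β : ℝ, 0 < β → β ≤ 1 →
        ∀ M : ℝ → ℂ, Measurable M →
          ∀ C : ℝ, 0 < C →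
            (∀ μ : ℝ, ‖M μ‖ ≤ C * |3 * μ ^ 2 - β| ^ (1/2 : ℝ) * jb μ ^ (s + 1)) →
            ∀ g : ℝ → ℂ, Measurable g →
              (∫⁻ μ : ℝ, ENNReal.ofReal (‖M μ‖ ^ 2 * ‖g (μ ^ 3 - β * μ)‖ ^ 2)) ^ (1/2 : ℝ) ≤
                ENNReal.ofReal (C * C₁) *
                  (∫⁻ ξ : ℝ, ENNReal.ofReal (jb ξ ^ (2 * (s + 1) / 3) * ‖g ξ‖ ^ 2)) ^ (1/2 : ℝ) := by
  set t : ℝ := 2 * (s + 1) / 3 with ht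
  set K : ℝ := (13 : ℝ) ^ |t| with hK
  have hKpos : 0 < K := Real.rpow_pos_of_pos (by norm_num) _
  refine ⟨(3 * K) ^ (1/2 : ℝ), Real.rpow_pos_of_pos (by positivity) _, ?_⟩
  intro β hb hb1 M hM C hC hMb g hg
  set H : ℝ → ENNReal := fun ξ => ENNReal.ofReal (jb ξ ^ t * ‖g ξ‖ ^ 2) with hH
  set I : ENNReal := ∫⁻ ξ : ℝ, H ξ with hI
  -- pointwise bound
  have hpt : ∀ μ : ℝ, ENNReal.ofReal (‖M μ‖ ^ 2 * ‖g (μ ^ 3 - β * μ)‖ ^ 2) ≤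
      ENNReal.ofReal (C ^ 2 * K) *
        (ENNReal.ofReal |3 * μ ^ 2 - β| * H (μ ^ 3 - β * μ)) := by
    intro μ
    have habs : (|3 * μ ^ 2 - β| ^ (1/2 : ℝ)) ^ 2 = |3 * μ ^ 2 - β| := by
      rw [← Real.rpow_natCast (|3 * μ ^ 2 - β| ^ (1/2 : ℝ)) 2,
        ← Real.rpow_mul (abs_nonneg _)]
      norm_num
    have hjb2 : (jb μ ^ (s + 1)) ^ 2 = jb μ ^ (2 * (s + 1)) := by
      rw [← Real.rpow_natCast (jb μ ^ (s + 1)) 2, ← Real.rpow_mul (jb_pos μ).le]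
      norm_num [mul_comm]
    have h1 : ‖M μ‖ ^ 2 ≤ C ^ 2 * (|3 * μ ^ 2 - β| * jb μ ^ (2 * (s + 1))) := by
      have := pow_le_pow_left₀ (norm_nonneg (M μ)) (hMb μ) 2
      calc ‖M μ‖ ^ 2 ≤ (C * |3 * μ ^ 2 - β| ^ (1/2 : ℝ) * jb μ ^ (s + 1)) ^ 2 := this
        _ = C ^ 2 * ((|3 * μ ^ 2 - β| ^ (1/2 : ℝ)) ^ 2 * (jb μ ^ (s + 1)) ^ 2) := by ring
        _ = C ^ 2 * (|3 * μ ^ 2 - β| * jb μ ^ (2 * (s + 1))) := by rw [habs, hjb2]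
    have h2 : jb μ ^ (2 * (s + 1)) ≤ K * jb (μ ^ 3 - β * μ) ^ t := jb_rpow_le s μ β hb hb1
    have h3 : ‖M μ‖ ^ 2 * ‖g (μ ^ 3 - β * μ)‖ ^ 2 ≤
        C ^ 2 * K * (|3 * μ ^ 2 - β| * (jb (μ ^ 3 - β * μ) ^ t * ‖g (μ ^ 3 - β * μ)‖ ^ 2)) := by
      have hgn : (0:ℝ) ≤ ‖g (μ ^ 3 - β * μ)‖ ^ 2 := by positivity
      have step : ‖M μ‖ ^ 2 ≤ C ^ 2 * K * (|3 * μ ^ 2 - β| * jb (μ ^ 3 - β * μ) ^ t) := by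
        calc ‖M μ‖ ^ 2 ≤ C ^ 2 * (|3 * μ ^ 2 - β| * jb μ ^ (2 * (s + 1))) := h1
          _ ≤ C ^ 2 * (|3 * μ ^ 2 - β| * (K * jb (μ ^ 3 - β * μ) ^ t)) := by
              have := mul_le_mul_of_nonneg_left h2 (abs_nonneg (3 * μ ^ 2 - β))
              nlinarith [sq_nonneg C]
          _ = C ^ 2 * K * (|3 * μ ^ 2 - β| * jb (μ ^ 3 - β * μ) ^ t) := by ring
      calc ‖M μ‖ ^ 2 * ‖g (μ ^ 3 - β * μ)‖ ^ 2
          ≤ (C ^ 2 * K * (|3 * μ ^ 2 - β| * jb (μ ^ 3 - β * μ) ^ t)) * ‖g (μ ^ 3 - β * μ)‖ ^ 2 :=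
            mul_le_mul_of_nonneg_right step hgn
        _ = C ^ 2 * K * (|3 * μ ^ 2 - β| * (jb (μ ^ 3 - β * μ) ^ t * ‖g (μ ^ 3 - β * μ)‖ ^ 2)) := by
            ring
    calc ENNReal.ofReal (‖M μ‖ ^ 2 * ‖g (μ ^ 3 - β * μ)‖ ^ 2)
        ≤ ENNReal.ofReal (C ^ 2 * K *
            (|3 * μ ^ 2 - β| * (jb (μ ^ 3 - β * μ) ^ t * ‖g (μ ^ 3 - β * μ)‖ ^ 2))) :=
          ENNReal.ofReal_le_ofReal h3
      _ = ENNReal.ofReal (C ^ 2 * K) *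
            (ENNReal.ofReal |3 * μ ^ 2 - β| * H (μ ^ 3 - β * μ)) := by
          rw [ENNReal.ofReal_mul (by positivity), ENNReal.ofReal_mul (abs_nonneg _)]
  have main : (∫⁻ μ : ℝ, ENNReal.ofReal (‖M μ‖ ^ 2 * ‖g (μ ^ 3 - β * μ)‖ ^ 2)) ≤
      ENNReal.ofReal (3 * C ^ 2 * K) * I := by
    calc (∫⁻ μ : ℝ, ENNReal.ofReal (‖M μ‖ ^ 2 * ‖g (μ ^ 3 - β * μ)‖ ^ 2))
        ≤ ∫⁻ μ : ℝ, ENNReal.ofReal (C ^ 2 * K) *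
            (ENNReal.ofReal |3 * μ ^ 2 - β| * H (μ ^ 3 - β * μ)) := lintegral_mono hpt
      _ = ENNReal.ofReal (C ^ 2 * K) *
            ∫⁻ μ : ℝ, ENNReal.ofReal |3 * μ ^ 2 - β| * H (μ ^ 3 - β * μ) :=
          lintegral_const_mul' _ _ ENNReal.ofReal_ne_top
      _ ≤ ENNReal.ofReal (C ^ 2 * K) * (3 * I) := by
          exact mul_le_mul_right (cov β hb H) _
      _ = ENNReal.ofReal (3 * C ^ 2 * K) * I := by
          rw [show ((3:ENNReal)) = ENNReal.ofReal 3 by norm_num, ← mul_assoc,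
            ← ENNReal.ofReal_mul (by positivity : (0:ℝ) ≤ C ^ 2 * K)]
          congr 1
          ring_nf
  calc (∫⁻ μ : ℝ, ENNReal.ofReal (‖M μ‖ ^ 2 * ‖g (μ ^ 3 - β * μ)‖ ^ 2)) ^ (1/2 : ℝ)
      ≤ (ENNReal.ofReal (3 * C ^ 2 * K) * I) ^ (1/2 : ℝ) :=
        ENNReal.rpow_le_rpow main (by norm_num)
    _ = ENNReal.ofReal (3 * C ^ 2 * K) ^ (1/2 : ℝ) * I ^ (1/2 : ℝ) :=
        ENNReal.mul_rpow_of_nonneg _ _ (by norm_num)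
    _ = ENNReal.ofReal (C * (3 * K) ^ (1/2 : ℝ)) * I ^ (1/2 : ℝ) := by
        rw [ENNReal.ofReal_rpow_of_pos (by positivity)]
        congr 1
        rw [show (3 * C ^ 2 * K : ℝ) = C ^ 2 * (3 * K) by ring,
          Real.mul_rpow (by positivity) (by positivity),
          ← Real.rpow_natCast C 2, ← Real.rpow_mul hC.le]
        norm_num
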